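/- Let (V_t)_{t≥1} be i.i.d. real-valued random variables with |V_t| ≤ c almost surely for some c > 0 and K := E[V₁] > 0, and let α ∈ (0,1). Define ρ* := inf{n ≥ 1 : Σ_{t=1}^n V_t ≥ log(n²/α)} and assume E[ρ*] < ∞. Then K·E[ρ*] ≤ log(1/α) + 2·log(E[ρ*]) + c. -/

import Mathlib

open MeasureTheory Set
open scoped ENNReal

/-- **Wald bound for the oracle stopping time.**
Let `(V t)_{t ≥ 1}` be i.i.d. real random variables (indexed by `t : ℕ`, `V t` being the
`(t+1)`-st variable, so `Σ_{t=1}^n V_t = Σ_{t ∈ range n} V t`), with `|V t| ≤ c` a.s. for some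
`c > 0` and `K = E[V₁] > 0`, and let `α ∈ (0,1)`. Define
`ρ* = inf {n ≥ 1 : Σ_{t=1}^n V_t ≥ log(n²/α)}` and assume `E[ρ*] < ∞`. Then
`K·E[ρ*] ≤ log(1/α) + 2·log(E[ρ*]) + c`. -/
theorem stmt10_oracle_stopping_time_wald_bound
    {Ω : Type*} {m0 : MeasurableSpace Ω} (P : Measure Ω) [IsProbabilityMeasure P]
    (V : ℕ → Ω → ℝ) (hVmeas : ∀ t, Measurable (V t))
    (hiid_indep : ProbabilityTheory.iIndepFun V P)
    (hiid_ident : ∀ t, ProbabilityTheory.IdentDistrib (V t) (V 0) P P)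
    (c : ℝ) (hc : 0 < c) (hbdd : ∀ t, ∀ᵐ ω ∂P, |V t ω| ≤ c)
    (K : ℝ) (hK : K = ∫ ω, V 0 ω ∂P) (hKpos : 0 < K)
    (α : ℝ) (hα : α ∈ Set.Ioo (0 : ℝ) 1)
    (ρ : Ω → ℕ∞)
    (hρ : ∀ ω, ρ ω =
      sInf ((fun n : ℕ => (n : ℕ∞)) ''
        {n : ℕ | 1 ≤ n ∧ Real.log ((n : ℝ) ^ 2 / α) ≤ ∑ t ∈ Finset.range n, V t ω}))
    (hfin : ∫⁻ ω, (ρ ω : ℝ≥0∞) ∂P < ⊤) :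
    K * (∫⁻ ω, (ρ ω : ℝ≥0∞) ∂P).toReal ≤
      Real.log (1 / α) + 2 * Real.log (∫⁻ ω, (ρ ω : ℝ≥0∞) ∂P).toReal + c := by
  classical
  obtain ⟨hα0, hα1⟩ := hα
  set S : ℕ → Ω → ℝ := fun n ω => ∑ t ∈ Finset.range n, V t ω with hSdef
  set B : ℕ → ℝ := fun n => Real.log ((n : ℝ) ^ 2 / α) with hBdef
  set A : Ω → Set ℕ := fun ω => {n : ℕ | 1 ≤ n ∧ B n ≤ S n ω} with hAdef
  have hSmeas : ∀ n, Measurable (S n) := fun n => Finset.measurable_sum _ fun t _ => hVmeas t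
  have hAmem : ∀ n, MeasurableSet {ω | n ∈ A ω} := by
    intro n
    have h : {ω | n ∈ A ω} = {ω | 1 ≤ n} ∩ {ω | B n ≤ S n ω} := rfl
    rw [h]
    exact (MeasurableSet.const _).inter (measurableSet_le measurable_const (hSmeas n))
  set N : Ω → ℕ := fun ω => sInf (A ω) with hNdef
  -- N characterization
  have hNmem : ∀ ω, (A ω).Nonempty → N ω ∈ A ω := fun ω h => Nat.sInf_mem h
  have hNmeas : Measurable N := by
    apply measurable_to_countable'
    intro k
    have h : N ⁻¹' {k} =
        ({ω | k ∈ A ω} ∪ ({ω : Ω | k = 0} ∩ ⋂ j, {ω | j ∈ A ω}ᶜ)) ∩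
          ⋂ j ∈ Finset.range k, {ω | j ∈ A ω}ᶜ := by
      ext ω
      simp only [Set.mem_preimage, Set.mem_singleton_iff, Set.mem_inter_iff, Set.mem_union,
        Set.mem_iInter, Set.mem_compl_iff, Finset.mem_range, Set.mem_setOf_eq]
      constructor
      · rintro rfl
        refine ⟨?_, fun j hj => Nat.notMem_of_lt_sInf hj⟩
        by_cases hne : (A ω).Nonempty
        · exact Or.inl (Nat.sInf_mem hne)
        · rw [Set.not_nonempty_iff_eq_empty] at hne
          exact Or.inr ⟨by simp [hNdef, hne], fun j hj => by simp [hne] at hj⟩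
      · rintro ⟨hk | ⟨hk0, hemp⟩, hlt⟩
        · refine le_antisymm (Nat.sInf_le hk) ?_
          by_contra hcon
          push_neg at hcon
          exact hlt _ hcon (Nat.sInf_mem ⟨k, hk⟩)
        · have : A ω = ∅ := Set.eq_empty_iff_forall_notMem.2 hemp
          simp [hNdef, this, hk0]
    rw [h]
    refine (MeasurableSet.union (hAmem k) ((MeasurableSet.const _).inter
      (MeasurableSet.iInter fun j => (hAmem j).compl))).inter ?_
    exact MeasurableSet.biInter (Set.to_countable _) fun j _ => (hAmem j).compl
  -- a.e. nonempty
  have hZmeas : MeasurableSet {ω | A ω = ∅} := by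
    have h : {ω | A ω = ∅} = ⋂ j, {ω | j ∈ A ω}ᶜ := by
      ext ω
      simp [Set.eq_empty_iff_forall_notMem]
    rw [h]
    exact MeasurableSet.iInter fun j => (hAmem j).compl
  have hZ : P {ω | A ω = ∅} = 0 := by
    by_contra hne
    have htop : ∀ ω ∈ {ω | A ω = ∅}, ((ρ ω : ℝ≥0∞)) = ⊤ := by
      intro ω hω
      have : ρ ω = ⊤ := by
        rw [hρ ω]
        have : ((fun n : ℕ => (n : ℕ∞)) ''
            {n : ℕ | 1 ≤ n ∧ Real.log ((n : ℝ) ^ 2 / α) ≤ ∑ t ∈ Finset.range n, V t ω}) = ∅ := by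
          have := hω
          simp only [Set.mem_setOf_eq] at this
          rw [hAdef] at this
          simp only [Set.image_eq_empty]
          exact this
        rw [this, sInf_empty]
      rw [this]; rfl
    have hle : (⊤ : ℝ≥0∞) * P {ω | A ω = ∅} ≤ ∫⁻ ω, (ρ ω : ℝ≥0∞) ∂P := by
      rw [← lintegral_indicator_const hZmeas]
      apply lintegral_mono
      intro ω
      by_cases hω : ω ∈ {ω | A ω = ∅}
      · rw [Set.indicator_of_mem hω]
        exact le_of_eq (htop ω hω).symm
      · rw [Set.indicator_of_notMem hω]; exact zero_le
    rw [ENNReal.top_mul hne] at hle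
    exact absurd (lt_of_le_of_lt hle hfin) (lt_irrefl _)
  have hae_ne : ∀ᵐ ω ∂P, (A ω).Nonempty := by
    rw [ae_iff]
    convert hZ using 2
    ext ω
    simp [Set.not_nonempty_iff_eq_empty]
  -- rewrite the lintegral
  have hρN : ∀ ω, (A ω).Nonempty → ρ ω = (N ω : ℕ∞) := by
    intro ω hne
    rw [hρ ω]
    apply le_antisymm
    · exact sInf_le ⟨N ω, hNmem ω hne, rfl⟩
    · apply le_sInf
      rintro x ⟨n, hn, rfl⟩
      exact Nat.cast_le.mpr (Nat.sInf_le hn)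
  have hIeq : ∫⁻ ω, (ρ ω : ℝ≥0∞) ∂P = ∫⁻ ω, (N ω : ℝ≥0∞) ∂P := by
    apply lintegral_congr_ae
    filter_upwards [hae_ne] with ω hne
    rw [hρN ω hne]
    simp
  -- basic integrals of N
  have hNcoe_meas : Measurable fun ω => (N ω : ℝ≥0∞) := by
    exact Measurable.comp (measurable_of_countable _) hNmeas
  have hIlt : ∫⁻ ω, (N ω : ℝ≥0∞) ∂P < ⊤ := hIeq ▸ hfin
  set I : ℝ≥0∞ := ∫⁻ ω, (N ω : ℝ≥0∞) ∂P with hIdef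
  have hN1ae : ∀ᵐ ω ∂P, 1 ≤ N ω := by
    filter_upwards [hae_ne] with ω h
    exact (hNmem ω h).1
  have hI1 : 1 ≤ I := by
    calc (1 : ℝ≥0∞) = ∫⁻ _, 1 ∂P := by simp
    _ ≤ I := lintegral_mono_ae (hN1ae.mono fun ω h => by exact_mod_cast h)
  set m : ℝ := I.toReal with hmdef
  have hm1 : 1 ≤ m := by
    have := ENNReal.toReal_mono hIlt.ne hI1
    simpa using this
  have hm0 : 0 < m := lt_of_lt_of_le one_pos hm1
  have hNreal_int : Integrable (fun ω => (N ω : ℝ)) P := by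
    have h := integrable_toReal_of_lintegral_ne_top hNcoe_meas.aemeasurable hIlt.ne
    simpa using h
  have hNint_eq : ∫ ω, (N ω : ℝ) ∂P = m := by
    rw [hmdef, hIdef, ← integral_toReal hNcoe_meas.aemeasurable
      (ae_of_all _ fun ω => ENNReal.natCast_lt_top _)]
    simp
  -- layer cake
  have hEvmeas : ∀ t : ℕ, MeasurableSet {ω | t < N ω} := fun t =>
    hNmeas measurableSet_Ioi
  have hlayer : ∑' t : ℕ, P {ω | t < N ω} = I := by
    have hpt : ∀ ω, (∑' t : ℕ, Set.indicator {ω' | t < N ω'} (fun _ => (1 : ℝ≥0∞)) ω)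
        = (N ω : ℝ≥0∞) := by
      intro ω
      rw [tsum_eq_sum (s := Finset.range (N ω)) (fun t ht => by
        rw [Set.indicator_of_notMem]
        simpa using ht)]
      rw [Finset.sum_congr rfl (fun t ht => Set.indicator_of_mem (by
        simpa using ht) _)]
      simp
    rw [hIdef, ← lintegral_congr hpt, lintegral_tsum
      (fun t => (measurable_const.indicator (hEvmeas t)).aemeasurable)]
    congr 1
    funext t
    rw [lintegral_indicator_const (hEvmeas t)]
    simp
  -- overshoot bound
  have hB1 : 0 < B 1 := by
    rw [hBdef]
    simp only [Nat.cast_one, one_pow]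
    exact Real.log_pos (by rw [lt_div_iff₀ hα0]; linarith)
  have hover : ∀ᵐ ω ∂P, S (N ω) ω ≤ B (N ω) + c := by
    filter_upwards [hae_ne, ae_all_iff.2 hbdd] with ω hne hb
    rcases Nat.lt_or_ge 1 (N ω) with h2 | h1
    · have hlt1 : N ω - 1 < N ω := by omega
      have hnm : N ω - 1 ∉ A ω := Nat.notMem_of_lt_sInf hlt1
      have h1le : 1 ≤ N ω - 1 → ¬ B (N ω - 1) ≤ S (N ω - 1) ω := fun h hb' => hnm ⟨h, hb'⟩
      have hSlt : S (N ω - 1) ω < B (N ω - 1) := by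
        by_contra hcon
        push_neg at hcon
        exact h1le (by omega) hcon
      have hsplit : S (N ω) ω = S (N ω - 1) ω + V (N ω - 1) ω := by
        have h : N ω = (N ω - 1) + 1 := by omega
        rw [hSdef]
        simp only []
        conv_lhs => rw [h, Finset.sum_range_succ]
      have hVle : V (N ω - 1) ω ≤ c := le_trans (le_abs_self _) (hb _)
      have hBmono : B (N ω - 1) ≤ B (N ω) := by
        rw [hBdef]
        apply Real.log_le_log
        · apply div_pos _ hα0
          have : (1 : ℝ) ≤ ((N ω - 1 : ℕ) : ℝ) := by exact_mod_cast by omega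
          positivity
        · gcongr
      calc S (N ω) ω = S (N ω - 1) ω + V (N ω - 1) ω := hsplit
        _ ≤ B (N ω - 1) + c := add_le_add hSlt.le hVle
        _ ≤ B (N ω) + c := add_le_add hBmono le_rfl
    · have hN1 : N ω = 1 := le_antisymm h1 (hNmem ω hne).1
      rw [hN1]
      have : S 1 ω = V 0 ω := by
        rw [hSdef]; simp
      rw [this]
      have := le_trans (le_abs_self _) (hb 0)
      linarith [hB1]
  -- F = S (N ω) ω measurable and integrable
  have hFmeas : Measurable fun ω => S (N ω) ω := by
    have h1 : Measurable fun p : Ω × ℕ => S p.2 p.1 :=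
      measurable_from_prod_countable_left fun n => hSmeas n
    exact h1.comp (measurable_id.prodMk hNmeas)
  have habs : ∀ᵐ ω ∂P, ∀ t, |V t ω| ≤ c := ae_all_iff.2 hbdd
  have hFint : Integrable (fun ω => S (N ω) ω) P := by
    apply Integrable.mono' (hNreal_int.const_mul c) hFmeas.aestronglyMeasurable
    filter_upwards [habs] with ω hb
    rw [Real.norm_eq_abs]
    calc |S (N ω) ω| ≤ ∑ t ∈ Finset.range (N ω), |V t ω| := Finset.abs_sum_le_sum_abs _ _
      _ ≤ ∑ t ∈ Finset.range (N ω), c := Finset.sum_le_sum fun t _ => hb t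
      _ = c * (N ω : ℝ) := by simp [mul_comm]
  -- past events
  set E : ℕ → Set Ω := fun t => {ω | ∀ n, 1 ≤ n → n ≤ t → S n ω < B n} with hEdef
  have hEmeas : ∀ t, MeasurableSet (E t) := by
    intro t
    have h : E t = ⋂ n, ⋂ (_ : 1 ≤ n), ⋂ (_ : n ≤ t), {ω | S n ω < B n} := by
      ext ω; simp [hEdef]
    rw [h]
    exact MeasurableSet.iInter fun n => MeasurableSet.iInter fun _ =>
      MeasurableSet.iInter fun _ => measurableSet_lt (hSmeas n) measurable_const
  have hEiff : ∀ᵐ ω ∂P, ∀ t, (t < N ω ↔ ω ∈ E t) := by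
    filter_upwards [hae_ne] with ω hne t
    constructor
    · intro ht n h1 hnt
      by_contra hcon
      push_neg at hcon
      have hmem : n ∈ A ω := ⟨h1, hcon⟩
      have hNn : N ω ≤ n := Nat.sInf_le hmem
      omega
    · intro hE
      by_contra hcon
      push_neg at hcon
      have hmem := hNmem ω hne
      exact absurd hmem.2 (not_le.2 (hE (N ω) hmem.1 hcon))
  -- independence of V t and the indicator of E t
  have hindep : ∀ t, ProbabilityTheory.IndepFun (V t) ((E t).indicator fun _ => (1 : ℝ)) P := by
    intro t
    have hbase := hiid_indep.indepFun_finset {t} (Finset.range t)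
      (by simp [Finset.disjoint_left]) hVmeas
    set C : Set (↥(Finset.range t) → ℝ) :=
      {x | ∀ n, 1 ≤ n → n ≤ t →
        (∑ j ∈ (Finset.range t).attach, if (j : ℕ) < n then x j else 0) < B n} with hCdef
    have hCmeas : MeasurableSet C := by
      have h : C = ⋂ n, ⋂ (_ : 1 ≤ n), ⋂ (_ : n ≤ t),
          {x | (∑ j ∈ (Finset.range t).attach, if (j : ℕ) < n then x j else 0) < B n} := by
        ext x; simp [hCdef]
      rw [h]
      refine MeasurableSet.iInter fun n => MeasurableSet.iInter fun _ =>
        MeasurableSet.iInter fun _ => measurableSet_lt ?_ measurable_const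
      refine Finset.measurable_sum _ fun j _ => ?_
      split_ifs
      · exact measurable_pi_apply j
      · exact measurable_const
    have hkey : ∀ ω, ((fun (i : ↥(Finset.range t)) => V i ω) ∈ C) ↔ ω ∈ E t := by
      intro ω
      simp only [hCdef, hEdef, Set.mem_setOf_eq]
      refine forall_congr' fun n => imp_congr_right fun h1 => imp_congr_right fun hnt => ?_
      have hsum : (∑ j ∈ (Finset.range t).attach,
          if ((j : ℕ)) < n then V (j : ℕ) ω else 0) = S n ω := by
        rw [Finset.sum_attach (Finset.range t) (fun j => if j < n then V j ω else 0)]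
        rw [hSdef]
        simp only []
        rw [← Finset.sum_subset (Finset.range_subset_range.2 hnt)
          (fun x _ hx => if_neg (by simpa using hx))]
        exact Finset.sum_congr rfl fun x hx => if_pos (by simpa using hx)
      rw [hsum]
    have hφm : Measurable fun x : ↥({t} : Finset ℕ) → ℝ => x ⟨t, Finset.mem_singleton_self t⟩ :=
      measurable_pi_apply _
    have hψm : Measurable fun x : ↥(Finset.range t) → ℝ => C.indicator (fun _ => (1 : ℝ)) x :=
      measurable_const.indicator hCmeas
    have hcomp := hbase.comp hφm hψm
    have h1 : ((fun x : ↥({t} : Finset ℕ) → ℝ => x ⟨t, Finset.mem_singleton_self t⟩) ∘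
        (fun a (i : ↥({t} : Finset ℕ)) => V i a)) = V t := rfl
    have h2 : ((fun x : ↥(Finset.range t) → ℝ => C.indicator (fun _ => (1 : ℝ)) x) ∘
        (fun a (i : ↥(Finset.range t)) => V i a)) =
        (E t).indicator fun _ => (1 : ℝ) := by
      funext ω
      simp only [Function.comp]
      by_cases hω : ω ∈ E t
      · rw [Set.indicator_of_mem hω, Set.indicator_of_mem ((hkey ω).2 hω)]
      · rw [Set.indicator_of_notMem hω, Set.indicator_of_notMem (fun h => hω ((hkey ω).1 h))]
    rw [h1, h2] at hcomp
    exact hcomp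
  -- expectations
  have hVint : ∀ t, Integrable (V t) P := fun t =>
    Integrable.mono' (integrable_const c) (hVmeas t).aestronglyMeasurable
      ((hbdd t).mono fun ω h => by rwa [Real.norm_eq_abs])
  have hindint : ∀ t, Integrable ((E t).indicator fun _ => (1 : ℝ)) P := fun t =>
    (integrable_const (1 : ℝ)).indicator (hEmeas t)
  have hVK : ∀ t, ∫ ω, V t ω ∂P = K := fun t => by rw [hK]; exact (hiid_ident t).integral_eq
  have hmul : ∀ t, ∫ ω, V t ω * (E t).indicator (fun _ => (1 : ℝ)) ω ∂P
      = K * (P (E t)).toReal := by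
    intro t
    have h := (hindep t).integral_mul_eq_mul_integral (hVint t).aestronglyMeasurable (hindint t).aestronglyMeasurable
    have h' : (fun ω => V t ω * (E t).indicator (fun _ => (1 : ℝ)) ω)
        = V t * (E t).indicator fun _ => (1 : ℝ) := rfl
    rw [h', h, hVK t, integral_indicator_const (1 : ℝ) (hEmeas t), smul_eq_mul, mul_one, measureReal_def]
  have hPeq : ∀ t, P (E t) = P {ω | t < N ω} := fun t =>
    measure_congr (Filter.eventuallyEq_set.2 (hEiff.mono fun ω h => (h t).symm))
  -- Wald computation
  set g : ℕ → Ω → ℝ := fun t => {ω | t < N ω}.indicator (V t) with hgdef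
  have hgmeas : ∀ t, Measurable (g t) := fun t => (hVmeas t).indicator (hEvmeas t)
  have hgpt : ∀ ω, (∑' t, g t ω) = S (N ω) ω := by
    intro ω
    rw [tsum_eq_sum (s := Finset.range (N ω))
      (fun t ht => Set.indicator_of_notMem (by simpa using ht) _)]
    exact Finset.sum_congr rfl fun t ht => Set.indicator_of_mem (by simpa using ht) _
  have hgbound : ∀ t, ∫⁻ ω, ‖g t ω‖₊ ∂P ≤ ENNReal.ofReal c * P {ω | t < N ω} := by
    intro t
    rw [← lintegral_indicator_const (hEvmeas t)]
    apply lintegral_mono_ae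
    filter_upwards [hbdd t] with ω hb
    by_cases hω : ω ∈ {ω | t < N ω}
    · rw [hgdef]
      simp only []
      rw [Set.indicator_of_mem hω, Set.indicator_of_mem hω, ← enorm_eq_nnnorm, ← ofReal_norm]
      exact ENNReal.ofReal_le_ofReal (by rwa [Real.norm_eq_abs])
    · rw [hgdef]
      simp only []
      rw [Set.indicator_of_notMem hω, Set.indicator_of_notMem hω]
      simp
  have hgsum : (∑' t, ∫⁻ ω, ‖g t ω‖₊ ∂P) ≠ ⊤ := by
    apply ne_of_lt
    calc (∑' t, ∫⁻ ω, ‖g t ω‖₊ ∂P) ≤ ∑' t, ENNReal.ofReal c * P {ω | t < N ω} :=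
        ENNReal.tsum_le_tsum hgbound
      _ = ENNReal.ofReal c * I := by rw [ENNReal.tsum_mul_left, hlayer]
      _ < ⊤ := ENNReal.mul_lt_top ENNReal.ofReal_lt_top hIlt
  have hwald : ∫ ω, S (N ω) ω ∂P = K * m := by
    have h1 : ∫ ω, (∑' t, g t ω) ∂P = ∑' t, ∫ ω, g t ω ∂P :=
      integral_tsum (fun t => (hgmeas t).aestronglyMeasurable) hgsum
    have h2 : ∀ t, ∫ ω, g t ω ∂P = K * (P {ω | t < N ω}).toReal := by
      intro t
      have hae : g t =ᵐ[P] fun ω => V t ω * (E t).indicator (fun _ => (1 : ℝ)) ω := by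
        filter_upwards [hEiff] with ω h
        rw [hgdef]
        simp only []
        by_cases hω : t < N ω
        · rw [Set.indicator_of_mem (show ω ∈ {ω | t < N ω} from hω),
            Set.indicator_of_mem ((h t).1 hω), mul_one]
        · rw [Set.indicator_of_notMem (show ω ∉ {ω | t < N ω} from hω),
            Set.indicator_of_notMem (fun hcc => hω ((h t).2 hcc)), mul_zero]
      rw [integral_congr_ae hae, hmul t, hPeq t]
    calc ∫ ω, S (N ω) ω ∂P = ∫ ω, (∑' t, g t ω) ∂P :=
          integral_congr_ae (ae_of_all _ fun ω => (hgpt ω).symm)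
      _ = ∑' t, ∫ ω, g t ω ∂P := h1
      _ = ∑' t, K * (P {ω | t < N ω}).toReal := tsum_congr h2
      _ = K * ∑' t, (P {ω | t < N ω}).toReal := by rw [tsum_mul_left]
      _ = K * (∑' t, P {ω | t < N ω}).toReal := by
          rw [ENNReal.tsum_toReal_eq (fun t => measure_ne_top P _)]
      _ = K * m := by rw [hlayer]
  -- logarithm estimates
  have hNRmeas : Measurable fun ω => ((N ω : ℝ)) := (measurable_of_countable _).comp hNmeas
  set L : Ω → ℝ := fun ω => Real.log (N ω) with hLdef
  have hLmeas : Measurable L := Real.measurable_log.comp hNRmeas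
  have hLint : Integrable L P := by
    apply Integrable.mono' hNreal_int hLmeas.aestronglyMeasurable
    filter_upwards [hN1ae] with ω h1
    have hpos : (1 : ℝ) ≤ (N ω : ℝ) := by exact_mod_cast h1
    rw [Real.norm_eq_abs, abs_of_nonneg (Real.log_nonneg hpos)]
    have := Real.log_le_sub_one_of_pos (lt_of_lt_of_le one_pos hpos)
    linarith
  have hLle : ∫ ω, L ω ∂P ≤ Real.log m := by
    have hptw : ∀ᵐ ω ∂P, L ω ≤ Real.log m + (N ω : ℝ) / m - 1 := by
      filter_upwards [hN1ae] with ω h1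
      have hpos : (0 : ℝ) < (N ω : ℝ) := by
        have h0 : 0 < N ω := h1
        exact_mod_cast h0
      have hdiv : (0 : ℝ) < (N ω : ℝ) / m := div_pos hpos hm0
      have hlog := Real.log_le_sub_one_of_pos hdiv
      rw [Real.log_div (ne_of_gt hpos) (ne_of_gt hm0)] at hlog
      rw [hLdef]
      simp only []
      linarith
    have hrint : Integrable (fun ω => Real.log m + (N ω : ℝ) / m - 1) P := by
      apply Integrable.sub _ (integrable_const 1)
      exact (integrable_const (Real.log m)).add (hNreal_int.div_const m)
    calc ∫ ω, L ω ∂P ≤ ∫ ω, (Real.log m + (N ω : ℝ) / m - 1) ∂P :=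
          integral_mono_ae hLint hrint hptw
      _ = Real.log m + m / m - 1 := by
          have hdiv : Integrable (fun ω => (N ω : ℝ) / m) P := hNreal_int.div_const m
          have hfint : Integrable (fun ω => Real.log m + (N ω : ℝ) / m) P :=
            (integrable_const (Real.log m)).add hdiv
          rw [integral_sub hfint (integrable_const 1),
            integral_add (integrable_const (Real.log m)) hdiv, integral_div, hNint_eq]
          simp
      _ = Real.log m := by rw [div_self (ne_of_gt hm0)]; ring
  -- rewrite B (N ω)
  have hBrw : ∀ᵐ ω ∂P, B (N ω) = 2 * L ω - Real.log α := by
    filter_upwards [hN1ae] with ω h1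
    have hpos : (0 : ℝ) < (N ω : ℝ) := by
      have h0 : 0 < N ω := h1
      exact_mod_cast h0
    rw [hBdef, hLdef]
    simp only []
    rw [Real.log_div (pow_ne_zero _ (ne_of_gt hpos)) (ne_of_gt hα0), Real.log_pow]
    push_cast
    ring
  have hmain : K * m ≤ Real.log (1 / α) + 2 * Real.log m + c := by
    have hGint : Integrable (fun ω => 2 * L ω - Real.log α + c) P :=
      ((hLint.const_mul 2).sub (integrable_const _)).add (integrable_const c)
    have h1 : ∫ ω, S (N ω) ω ∂P ≤ ∫ ω, (2 * L ω - Real.log α + c) ∂P := by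
      apply integral_mono_ae hFint hGint
      filter_upwards [hover, hBrw] with ω hov hrw
      rw [← hrw]
      exact hov
    have h2 : ∫ ω, (2 * L ω - Real.log α + c) ∂P = 2 * ∫ ω, L ω ∂P - Real.log α + c := by
      have h2L : Integrable (fun ω => 2 * L ω) P := hLint.const_mul 2
      have hsub : Integrable (fun ω => 2 * L ω - Real.log α) P := h2L.sub (integrable_const _)
      rw [integral_add hsub (integrable_const c), integral_sub h2L (integrable_const _),
        MeasureTheory.integral_const_mul]
      simp
    rw [hwald, h2] at h1
    have hlog1α : Real.log (1 / α) = - Real.log α := by rw [one_div, Real.log_inv]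
    linarith [hLle]
  calc K * (∫⁻ ω, (ρ ω : ℝ≥0∞) ∂P).toReal = K * m := by rw [hIeq]
    _ ≤ Real.log (1 / α) + 2 * Real.log m + c := hmain
    _ = Real.log (1 / α) + 2 * Real.log (∫⁻ ω, (ρ ω : ℝ≥0∞) ∂P).toReal + c := by rw [hIeq]
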